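/- arXiv:1012.4949 — 3 statements merged into one kernel-verified Lean document; each statement's English description precedes it below -/
import Mathlib

section
/- Let F = Frac(ℚ[x₁,…,xₙ]) and let (y, B) be a seed such that y₁,…,yₙ are algebraically independent over ℚ and generate F as a field extension of ℚ (i.e., y is a free generating set of F). Then for every index i the entries of the mutated cluster in μ_i(y,B) = (y', μ_i(B)) are again algebraically independent over ℚ and generate F as a field extension of ℚ. -/
open scoped BigOperators

/-- The field `F = Frac(ℚ[x₁,…,xₙ])` of rational functions in `n` variables over `ℚ`. -/
abbrev F (n : ℕ) := FractionRing (MvPolynomial (Fin n) ℚ)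

/-- Fomin–Zelevinsky matrix mutation of a skew-symmetric integer matrix at index `i`. -/
def mutate {n : ℕ} (B : Matrix (Fin n) (Fin n) ℤ) (i : Fin n) : Matrix (Fin n) (Fin n) ℤ :=
  Matrix.of fun j k =>
    if j = i ∨ k = i then -B j k
    else B j k + max (B j i) 0 * max (B i k) 0 - max (-B j i) 0 * max (-B i k) 0

/-- Seed mutation at index `i`: the `i`-th cluster variable `yᵢ` is replaced by
`(∏ⱼ yⱼ^{max(bⱼᵢ,0)} + ∏ⱼ yⱼ^{max(−bⱼᵢ,0)}) / yᵢ`, and `B` is mutated. -/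
noncomputable def seedMutate {n : ℕ}
    (s : (Fin n → F n) × Matrix (Fin n) (Fin n) ℤ) (i : Fin n) :
    (Fin n → F n) × Matrix (Fin n) (Fin n) ℤ :=
  (Function.update s.1 i
      ((∏ j, s.1 j ^ (max (s.2 j i) 0).toNat + ∏ j, s.1 j ^ (max (-s.2 j i) 0).toNat) / s.1 i),
    mutate s.2 i)

open Polynomial in
/-- If `y` is transcendental over `R` and `P` is a nonzero element of `R`, then
`P / y` is transcendental over `R`. -/
theorem transcendental_algebraMap_div {R FF : Type*} [CommRing R] [IsDomain R] [Field FF]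
    [Algebra R FF] {y : FF} (hy : Transcendental R y) {P : R}
    (hP : algebraMap R FF P ≠ 0) :
    Transcendental R (algebraMap R FF P / y) := by
  have hPR : P ≠ 0 := fun h => hP (by simp [h])
  have hy0 : y ≠ 0 := fun h => hy (h ▸ isAlgebraic_zero)
  rintro ⟨p, hp, hpz⟩
  set q : R[X] := p.comp (C P * X) with hq
  have hCPX : (C P * X : R[X]) ≠ 0 := by
    intro h
    have := congrArg (fun r => Polynomial.coeff r 1) h
    simp at this
    exact hPR this
  have hq0 : q ≠ 0 := by
    rw [hq, Ne, comp_eq_zero_iff]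
    push_neg
    refine ⟨hp, fun _ h => hCPX ?_⟩
    rw [h]
    simp [coeff_C_mul]
  have haq : Polynomial.aeval (y⁻¹) q = 0 := by
    rw [hq, aeval_comp]
    simp only [map_mul, aeval_C, aeval_X]
    rw [← div_eq_mul_inv, hpz]
  haveI : Invertible (y⁻¹) := invertibleOfNonzero (inv_ne_zero hy0)
  have hrefl := (eval₂_reflect_eq_zero_iff (algebraMap R FF) y⁻¹ q.natDegree q le_rfl).mpr
    (by rwa [← aeval_def])
  refine hy ⟨reflect q.natDegree q, by rwa [Ne, reflect_eq_zero_iff], ?_⟩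
  rw [aeval_def, ← hrefl]
  congr 1
  rw [invOf_eq_inv, inv_inv]

/-- If the cluster of a seed is a free generating set of `F` over `ℚ`
(algebraically independent and generating `F` as a field extension), then so is
the cluster of any mutated seed. -/
theorem seedMutate_freeGenerating {n : ℕ}
    (y : Fin n → F n) (B : Matrix (Fin n) (Fin n) ℤ)
    (hB : ∀ j k, B k j = -B j k)
    (hindep : AlgebraicIndependent ℚ y)
    (hgen : IntermediateField.adjoin ℚ (Set.range y) = ⊤) (i : Fin n) :
    AlgebraicIndependent ℚ (seedMutate (y, B) i).1 ∧
    IntermediateField.adjoin ℚ (Set.range (seedMutate (y, B) i).1) = ⊤ := by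
  classical
  have hBii : B i i = 0 := by have := hB i i; omega
  set ep : Fin n → ℕ := fun j => (max (B j i) 0).toNat with hep
  set em : Fin n → ℕ := fun j => (max (-B j i) 0).toNat with hem
  have hepi : ep i = 0 := by simp [hep, hBii]
  have hemi : em i = 0 := by simp [hem, hBii]
  set P : F n := ∏ j, y j ^ ep j + ∏ j, y j ^ em j with hP
  set z : F n := P / y i with hz
  have hmut : (seedMutate (y, B) i).1 = Function.update y i z := rfl
  rw [hmut]
  have hyne : ∀ j, y j ≠ 0 := fun j h => (hindep.transcendental j) (h ▸ isAlgebraic_zero)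
  -- P is nonzero
  have hP0 : P ≠ 0 := by
    have hinj := algebraicIndependent_iff_injective_aeval.mp hindep
    set epf : Fin n →₀ ℕ := Finsupp.equivFunOnFinite.symm ep with hepf
    set emf : Fin n →₀ ℕ := Finsupp.equivFunOnFinite.symm em with hemf
    have hpe : MvPolynomial.aeval y (MvPolynomial.monomial epf (1 : ℚ)
        + MvPolynomial.monomial emf (1 : ℚ)) = P := by
      rw [map_add, MvPolynomial.aeval_monomial, MvPolynomial.aeval_monomial]
      simp [Finsupp.prod_pow, hepf, hemf, hP]
    intro h
    have h0 : MvPolynomial.aeval y (MvPolynomial.monomial epf (1 : ℚ)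
        + MvPolynomial.monomial emf (1 : ℚ)) = MvPolynomial.aeval y (0 : MvPolynomial (Fin n) ℚ) := by
      rw [hpe, map_zero, h]
    have := hinj h0
    have hc := congrArg (MvPolynomial.coeff epf) this
    by_cases hee : emf = epf <;> simp [MvPolynomial.coeff_monomial, hee] at hc
  -- the restricted family
  set y₀ : {j : Fin n // j ≠ i} → F n := fun j => y j with hy₀
  have hind₀ : AlgebraicIndependent ℚ y₀ := hindep.comp _ Subtype.val_injective
  have hyiT : Transcendental (Algebra.adjoin ℚ (Set.range y₀)) (y i) := by
    rw [← hind₀.option_iff_transcendental]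
    have h1 := hindep.comp (Equiv.optionSubtypeNe i) (Equiv.injective _)
    convert h1 using 1
    funext o; cases o <;> rfl
  have hPmem : P ∈ Algebra.adjoin ℚ (Set.range y₀) := by
    have hprod : ∀ e : Fin n → ℕ, e i = 0 →
        (∏ j, y j ^ e j) ∈ Algebra.adjoin ℚ (Set.range y₀) := by
      intro e he
      refine Subalgebra.prod_mem _ fun j _ => ?_
      rcases eq_or_ne j i with rfl | hj
      · rw [he, pow_zero]; exact one_mem _
      · exact Subalgebra.pow_mem _ (Algebra.subset_adjoin (show y j ∈ Set.range y₀ from ⟨⟨j, hj⟩, rfl⟩)) _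
    exact Subalgebra.add_mem _ (hprod ep hepi) (hprod em hemi)
  have hzT : Transcendental (Algebra.adjoin ℚ (Set.range y₀)) z := by
    have h2 := transcendental_algebraMap_div (FF := F n) hyiT
      (P := (⟨P, hPmem⟩ : ↥(Algebra.adjoin ℚ (Set.range y₀))))
      (by simpa [Subtype.ext_iff] using hP0)
    simpa [hz] using h2
  have hind' : AlgebraicIndependent ℚ (Function.update y i z) := by
    have h1 : AlgebraicIndependent ℚ (fun o : Option {j : Fin n // j ≠ i} => o.elim z y₀) :=
      (hind₀.option_iff_transcendental z).mpr hzT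
    have h2 := h1.comp (Equiv.optionSubtypeNe i).symm (Equiv.injective _)
    convert h2 using 1
    funext j
    rcases eq_or_ne j i with rfl | hj
    · simp [Function.comp, Equiv.optionSubtypeNe_symm_self]
    · simp [Function.comp, Equiv.optionSubtypeNe_symm_of_ne hj, Function.update_of_ne hj, hy₀]
  have hzne : z ≠ 0 := div_ne_zero hP0 (hyne i)
  refine ⟨hind', ?_⟩
  rw [eq_top_iff, ← hgen, IntermediateField.adjoin_le_iff]
  rintro _ ⟨j, rfl⟩
  set T := IntermediateField.adjoin ℚ (Set.range (Function.update y i z)) with hT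
  rcases eq_or_ne j i with hji | hj
  · rw [hji]
    have hzTm : z ∈ T := IntermediateField.subset_adjoin ℚ _
      (show z ∈ Set.range (Function.update y i z) from ⟨i, Function.update_self _ _ _⟩)
    have hPT : P ∈ T := by
      have hprod : ∀ e : Fin n → ℕ, e i = 0 → (∏ j, y j ^ e j) ∈ T := by
        intro e he
        refine Subfield.prod_mem _ fun k _ => ?_
        rcases eq_or_ne k i with rfl | hk
        · rw [he, pow_zero]; exact one_mem _
        · exact pow_mem (IntermediateField.subset_adjoin ℚ _
            (show y k ∈ Set.range (Function.update y i z) from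
              ⟨k, Function.update_of_ne hk _ _⟩)) _
      exact add_mem (hprod ep hepi) (hprod em hemi)
    have hyi : y i = P / z := by
      rw [hz, eq_div_iff hzne, hz, mul_comm, div_mul_cancel₀ _ (hyne i)]
    rw [hyi]
    exact div_mem hPT hzTm
  · exact IntermediateField.subset_adjoin ℚ _
      (show y j ∈ Set.range (Function.update y i z) from ⟨j, Function.update_of_ne hj _ _⟩)
end

section
/- (A seed is determined by its cluster.) Let F = Frac(ℚ[x₁,…,xₙ]) with canonical generators x₁,…,xₙ, and let B be an acyclic n×n skew-symmetric integer matrix. Let (u, C) and (u', C') be two seeds reachable from the initial seed (x,B) by finite sequences of seed mutations, and suppose they have the same cluster, i.e., {u₁,…,uₙ} = {u'₁,…,u'ₙ} as subsets of F. Then the seeds agree up to simultaneous relabelling: there is a permutation σ of {1,…,n} such that u'_j = u_{σ(j)} for all j and c'_{jk} = c_{σ(j)σ(k)} for all j, k. -/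
open scoped BigOperators

/-- The canonical generators `x₁, …, xₙ` of `F n`. -/
noncomputable def X {n : ℕ} (i : Fin n) : F n :=
  algebraMap (MvPolynomial (Fin n) ℚ) (F n) (MvPolynomial.X i)

/-- A seed is reachable from `s` if it is obtained by a finite sequence of seed mutations. -/
def Reachable {n : ℕ} (s t : (Fin n → F n) × Matrix (Fin n) (Fin n) ℤ) : Prop :=
  Relation.ReflTransGen (fun a b => ∃ i, b = seedMutate a i) s t

namespace Aux
open scoped Matrix
variable {n : ℕ}

abbrev R (n : ℕ) := MvPolynomial (Fin n) ℚ

noncomputable abbrev alg {n : ℕ} : R n →+* F n := algebraMap (R n) (F n)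

lemma alg_inj : Function.Injective (alg (n := n)) := IsFractionRing.injective _ _

lemma alg_ne_zero {p : R n} (hp : p ≠ 0) : alg p ≠ 0 := by
  intro h; exact hp (alg_inj (by simpa using h))

/-- The extension of `pderiv m` to the fraction field. -/
noncomputable def Dm (m : Fin n) (z : F n) : F n :=
  (alg (MvPolynomial.pderiv m (IsLocalization.sec (nonZeroDivisors (R n)) z).1)
      * alg ((IsLocalization.sec (nonZeroDivisors (R n)) z).2 : R n)
    - alg (IsLocalization.sec (nonZeroDivisors (R n)) z).1
      * alg (MvPolynomial.pderiv m ((IsLocalization.sec (nonZeroDivisors (R n)) z).2 : R n)))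
  / alg ((IsLocalization.sec (nonZeroDivisors (R n)) z).2 : R n) ^ 2

lemma Dm_spec (m : Fin n) (z : F n) (a b : R n) (hb : b ≠ 0) (h : z * alg b = alg a) :
    Dm m z = (alg (MvPolynomial.pderiv m a) * alg b - alg a * alg (MvPolynomial.pderiv m b))
      / alg b ^ 2 := by
  set c := (IsLocalization.sec (nonZeroDivisors (R n)) z).1 with hc
  set s := ((IsLocalization.sec (nonZeroDivisors (R n)) z).2 : R n) with hs
  have hsec : z * alg s = alg c := IsLocalization.sec_spec (nonZeroDivisors (R n)) z
  have hs0 : s ≠ 0 := nonZeroDivisors.coe_ne_zero _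
  have hcross : a * s = c * b := by
    apply alg_inj
    rw [map_mul, map_mul, ← h, ← hsec]; ring
  have hder := congrArg (MvPolynomial.pderiv m) hcross
  simp only [Derivation.leibniz, smul_eq_mul] at hder
  rw [Dm, ← hc, ← hs]
  rw [div_eq_div_iff (pow_ne_zero _ (alg_ne_zero hs0)) (pow_ne_zero _ (alg_ne_zero hb))]
  have key : (MvPolynomial.pderiv m c * s - c * MvPolynomial.pderiv m s) * b ^ 2
      = (MvPolynomial.pderiv m a * b - a * MvPolynomial.pderiv m b) * s ^ 2 := by
    linear_combination ((MvPolynomial.pderiv m) s * b + (MvPolynomial.pderiv m) b * s) * hcross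
      - (s * b) * hder
  simpa only [map_mul, map_sub, map_pow] using congrArg alg key

lemma exists_rep (z : F n) : ∃ a b : R n, b ≠ 0 ∧ z * alg b = alg a := by
  refine ⟨(IsLocalization.sec (nonZeroDivisors (R n)) z).1,
    ((IsLocalization.sec (nonZeroDivisors (R n)) z).2 : R n),
    nonZeroDivisors.coe_ne_zero _, IsLocalization.sec_spec _ z⟩

lemma Dm_algebraMap (m : Fin n) (p : R n) : Dm m (alg p) = alg (MvPolynomial.pderiv m p) := by
  rw [Dm_spec m (alg p) p 1 one_ne_zero (by simp)]
  simp

lemma Dm_add (m : Fin n) (z w : F n) : Dm m (z + w) = Dm m z + Dm m w := by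
  obtain ⟨a, s, hs, hz⟩ := exists_rep z
  obtain ⟨c, t, ht, hw⟩ := exists_rep w
  have hst : (s * t : R n) ≠ 0 := mul_ne_zero hs ht
  have hzw : (z + w) * alg (s * t) = alg (a * t + c * s) := by
    rw [map_mul, map_add, map_mul, map_mul]
    calc (z + w) * (alg s * alg t) = (z * alg s) * alg t + (w * alg t) * alg s := by ring
    _ = alg a * alg t + alg c * alg s := by rw [hz, hw]
  rw [Dm_spec m z a s hs hz, Dm_spec m w c t ht hw, Dm_spec m (z + w) _ _ hst hzw]
  have e1 : MvPolynomial.pderiv m (a * t + c * s)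
      = t * MvPolynomial.pderiv m a + a * MvPolynomial.pderiv m t
        + (s * MvPolynomial.pderiv m c + c * MvPolynomial.pderiv m s) := by
    simp only [map_add, Derivation.leibniz, smul_eq_mul]
    try ring
  have e2 : MvPolynomial.pderiv m (s * t)
      = s * MvPolynomial.pderiv m t + t * MvPolynomial.pderiv m s := by
    simp only [Derivation.leibniz, smul_eq_mul]
    try ring
  rw [e1, e2]
  have hs' := alg_ne_zero hs
  have ht' := alg_ne_zero ht
  field_simp
  simp only [map_add, map_mul]
  ring

lemma Dm_mul (m : Fin n) (z w : F n) : Dm m (z * w) = z * Dm m w + w * Dm m z := by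
  obtain ⟨a, s, hs, hz⟩ := exists_rep z
  obtain ⟨c, t, ht, hw⟩ := exists_rep w
  have hst : (s * t : R n) ≠ 0 := mul_ne_zero hs ht
  have hzw : (z * w) * alg (s * t) = alg (a * c) := by
    rw [map_mul, map_mul]
    calc (z * w) * (alg s * alg t) = (z * alg s) * (w * alg t) := by ring
    _ = alg a * alg c := by rw [hz, hw]
  have hs' := alg_ne_zero hs
  have ht' := alg_ne_zero ht
  have hzv : z = alg a / alg s := by rw [eq_div_iff hs']; exact hz
  have hwv : w = alg c / alg t := by rw [eq_div_iff ht']; exact hw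
  rw [Dm_spec m z a s hs hz, Dm_spec m w c t ht hw, Dm_spec m (z * w) _ _ hst hzw, hzv, hwv]
  have e1 : MvPolynomial.pderiv m (a * c)
      = a * MvPolynomial.pderiv m c + c * MvPolynomial.pderiv m a := by
    simp only [Derivation.leibniz, smul_eq_mul]
    try ring
  have e2 : MvPolynomial.pderiv m (s * t)
      = s * MvPolynomial.pderiv m t + t * MvPolynomial.pderiv m s := by
    simp only [Derivation.leibniz, smul_eq_mul]
    try ring
  rw [e1, e2]
  field_simp
  simp only [map_add, map_mul]
  ring

lemma Dm_one (m : Fin n) : Dm m (1 : F n) = 0 := by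
  have := Dm_mul m 1 1
  simp at this
  exact this

lemma Dm_div (m : Fin n) (x y : F n) (hy : y ≠ 0) :
    Dm m (x / y) = (Dm m x * y - x * Dm m y) / y ^ 2 := by
  have hq : x / y * y = x := div_mul_cancel₀ x hy
  have h := Dm_mul m (x / y) y
  rw [hq] at h
  rw [eq_div_iff (pow_ne_zero 2 hy), h]
  linear_combination (-(Dm m y)) * hq

lemma Dm_pow (m : Fin n) (x : F n) (hx : x ≠ 0) (k : ℕ) :
    Dm m (x ^ k) = (k : F n) * x ^ k * (Dm m x / x) := by
  induction k with
  | zero => simp [Dm_one]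
  | succ k ih =>
    rw [pow_succ, Dm_mul, ih]
    field_simp
    push_cast; ring

lemma Dm_prod_pow (m : Fin n) (u : Fin n → F n) (hu : ∀ j, u j ≠ 0) (e : Fin n → ℕ)
    (S : Finset (Fin n)) :
    Dm m (∏ j ∈ S, u j ^ e j)
      = (∏ j ∈ S, u j ^ e j) * ∑ j ∈ S, (e j : F n) * (Dm m (u j) / u j) := by
  classical
  induction S using Finset.induction with
  | empty => simp [Dm_one]
  | insert a S hnot ih =>
    rw [Finset.prod_insert hnot, Finset.sum_insert hnot, Dm_mul, ih, Dm_pow m _ (hu a)]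
    ring

lemma Dm_X (m j : Fin n) : Dm m (X j) = if j = m then 1 else 0 := by
  rw [X, Dm_algebraMap]
  rcases eq_or_ne j m with h | h
  · subst h; simp [MvPolynomial.pderiv_X_self]
  · simp [MvPolynomial.pderiv_X_of_ne (by exact fun hh => h hh.symm), h]

lemma X_ne_zero (j : Fin n) : (X j : F n) ≠ 0 :=
  alg_ne_zero (MvPolynomial.X_ne_zero j)


noncomputable def Lmat (u : Fin n → F n) : Matrix (Fin n) (Fin n) (F n) :=
  Matrix.of fun j m => Dm m (u j) / u j

noncomputable def Cf (C : Matrix (Fin n) (Fin n) ℤ) : Matrix (Fin n) (Fin n) (F n) :=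
  Matrix.of fun j k => ((C j k : ℤ) : F n)

def Skew (C : Matrix (Fin n) (Fin n) ℤ) : Prop := ∀ j k, C k j = -C j k

lemma Skew.diag {C : Matrix (Fin n) (Fin n) ℤ} (h : Skew C) (i : Fin n) : C i i = 0 := by
  have := h i i; omega

lemma max_sub_max (x : ℤ) : max x 0 - max (-x) 0 = x := by
  rcases le_total x 0 with h | h
  · rw [max_eq_right h, max_eq_left (by omega)]; ring
  · rw [max_eq_left h, max_eq_right (by omega)]; ring

/-- The vector `w` appearing in the elementary matrix of a mutation. -/
noncomputable def Evec (C : Matrix (Fin n) (Fin n) ℤ) (i : Fin n) (t : F n) : Fin n → F n :=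
  fun q => ((max (-(C q i)) 0 : ℤ) : F n) + t * ((C q i : ℤ) : F n) - (if q = i then 2 else 0)

/-- The elementary matrix relating `L` before and after a mutation. -/
noncomputable def Emat (C : Matrix (Fin n) (Fin n) ℤ) (i : Fin n) (t : F n) :
    Matrix (Fin n) (Fin n) (F n) :=
  Matrix.of fun p q => (if p = q then (1 : F n) else 0) + (if p = i then Evec C i t q else 0)

lemma Evec_i {C : Matrix (Fin n) (Fin n) ℤ} (h : Skew C) (i : Fin n) (t : F n) :
    Evec C i t i = -2 := by
  simp [Evec, h.diag i]

lemma sum_deltaw (f : Fin n → F n) (p i : Fin n) (c : F n) :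
    ∑ j, ((if j = p then (1 : F n) else 0) + (if j = i then c else 0)) * f j
      = f p + c * f i := by
  simp [add_mul, Finset.sum_add_distrib, ite_mul, Finset.sum_ite_eq']

lemma sum_deltaw' (g : Fin n → F n) (q i : Fin n) (c : F n) :
    ∑ k, g k * ((if k = q then (1 : F n) else 0) + (if k = i then c else 0))
      = g q + g i * c := by
  simp [mul_add, Finset.sum_add_distrib, mul_ite, Finset.sum_ite_eq']


lemma skew_mutate {C : Matrix (Fin n) (Fin n) ℤ} (h : Skew C) (i : Fin n) :
    Skew (mutate C i) := by
  intro j k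
  simp only [mutate, Matrix.of_apply]
  by_cases hj : j = i <;> by_cases hk : k = i
  · rw [if_pos (Or.inl hk), if_pos (Or.inl hj), hj, hk]
    have := h i i; omega
  · rw [if_pos (Or.inr hj), if_pos (Or.inl hj), hj]
    have := h i k; omega
  · rw [if_pos (Or.inl hk), if_pos (Or.inr hk), hk]
    have := h j i; omega
  · rw [if_neg (by tauto), if_neg (by tauto)]
    rw [h j k, h i k, h j i]
    simp only [neg_neg]
    ring

variable {C : Matrix (Fin n) (Fin n) ℤ} {i : Fin n} {t : F n}

lemma Emat_mul_apply (M : Matrix (Fin n) (Fin n) (F n)) (p q : Fin n) :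
    (Emat C i t * M) p q
      = M p q + (if p = i then ∑ k, Evec C i t k * M k q else 0) := by
  rw [Matrix.mul_apply]
  simp only [Emat, Matrix.of_apply, add_mul, ite_mul, one_mul, zero_mul]
  rw [Finset.sum_add_distrib]
  congr 1
  · exact (Finset.sum_ite_eq Finset.univ p (fun k => M k q)).trans (by simp)
  · by_cases hp : p = i <;> simp [hp]

lemma mul_Emat_apply (N : Matrix (Fin n) (Fin n) (F n)) (p q : Fin n) :
    (N * Emat C i t) p q = N p q + N p i * Evec C i t q := by
  rw [Matrix.mul_apply]
  simp only [Emat, Matrix.of_apply, mul_add, mul_ite, mul_one, mul_zero]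
  rw [Finset.sum_add_distrib]
  congr 1
  · exact (Finset.sum_ite_eq' Finset.univ q (fun k => N p k)).trans (by simp)
  · exact (Finset.sum_ite_eq' Finset.univ i (fun k => N p k * Evec C i t q)).trans (by simp)

lemma Emat_transpose_mul_apply (M : Matrix (Fin n) (Fin n) (F n)) (p q : Fin n) :
    ((Emat C i t)ᵀ * M) p q = M p q + Evec C i t p * M i q := by
  rw [Matrix.mul_apply]
  simp only [Matrix.transpose_apply, Emat, Matrix.of_apply, add_mul, ite_mul, one_mul, zero_mul]
  rw [Finset.sum_add_distrib]
  congr 1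
  · exact (Finset.sum_ite_eq' Finset.univ p (fun j => M j q)).trans (by simp)
  · exact (Finset.sum_ite_eq' Finset.univ i (fun j => Evec C i t p * M j q)).trans (by simp)

lemma Emat_mul_Emat (h : Skew C) (i : Fin n) (t : F n) :
    Emat C i t * Emat C i t = 1 := by
  ext p q
  rw [Emat_mul_apply]
  have hsum : ∑ k, Evec C i t k * Emat C i t k q
      = Evec C i t q + Evec C i t i * Evec C i t q := by
    simpa only [Emat, Matrix.of_apply] using sum_deltaw' (Evec C i t) q i (Evec C i t q)
  rw [hsum, Evec_i h, Matrix.one_apply]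
  by_cases hp : p = i
  · subst hp; simp [Emat]; ring
  · simp [Emat, hp]

lemma isUnit_Emat (h : Skew C) (i : Fin n) (t : F n) : IsUnit (Emat C i t) :=
  ⟨⟨Emat C i t, Emat C i t, Emat_mul_Emat h i t, Emat_mul_Emat h i t⟩, rfl⟩

lemma EtCE (h : Skew C) :
    (Emat C i t)ᵀ * Cf (mutate C i) * Emat C i t = Cf C := by
  ext p q
  rw [mul_Emat_apply, Emat_transpose_mul_apply, Emat_transpose_mul_apply]
  have hMii : Cf (mutate C i) i i = 0 := by simp [Cf, mutate, h.diag i]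
  have hMiq : ∀ q, Cf (mutate C i) i q = ((C q i : ℤ) : F n) := by
    intro q
    simp only [Cf, mutate, Matrix.of_apply, true_or, if_pos]
    rw [h q i]; push_cast; ring
  have hMpi : ∀ p, Cf (mutate C i) p i = -((C p i : ℤ) : F n) := by
    intro p
    simp only [Cf, mutate, Matrix.of_apply, or_true, if_pos]
    push_cast; ring
  have hCf : ∀ p q : Fin n, Cf C p q = ((C p q : ℤ) : F n) := fun _ _ => rfl
  by_cases hp : p = i <;> by_cases hq : q = i
  · rw [hp, hq, hMii, Evec_i h, hCf, h.diag i]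
    push_cast; ring
  · rw [hp, hMii, hMiq, Evec_i h, hCf, h q i]
    push_cast; ring
  · rw [hq, hMii, hMpi, Evec_i h, hCf]
    push_cast; ring
  · have hpq : Cf (mutate C i) p q
        = ((C p q : ℤ) : F n)
          + ((max (C p i) 0 : ℤ) : F n) * ((max (-(C q i)) 0 : ℤ) : F n)
          - ((max (-(C p i)) 0 : ℤ) : F n) * ((max (C q i) 0 : ℤ) : F n) := by
      simp only [Cf, mutate, Matrix.of_apply, if_neg (not_or.mpr ⟨hp, hq⟩)]
      rw [h q i, neg_neg]
      push_cast; ring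
    have hp1 : ((max (C p i) 0 : ℤ) : F n) - ((max (-(C p i)) 0 : ℤ) : F n)
        = ((C p i : ℤ) : F n) := by rw [← Int.cast_sub, max_sub_max]
    have hq1 : ((max (C q i) 0 : ℤ) : F n) - ((max (-(C q i)) 0 : ℤ) : F n)
        = ((C q i : ℤ) : F n) := by rw [← Int.cast_sub, max_sub_max]
    rw [hpq, hMii, hMiq, hMpi, hCf]
    simp only [Evec, if_neg hp, if_neg hq, sub_zero]
    linear_combination ((max (-(C q i)) 0 : ℤ) : F n) * hp1
      - ((max (-(C p i)) 0 : ℤ) : F n) * hq1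

lemma Dm_zero (m : Fin n) : Dm m (0 : F n) = 0 := by
  have := Dm_add m 0 0
  simpa using this.symm

lemma natCast_toNat_max (x : ℤ) : (((max x 0).toNat : ℕ) : F n) = ((max x 0 : ℤ) : F n) := by
  rw [← Int.cast_natCast, Int.toNat_of_nonneg (le_max_right x 0)]

/-- The seed invariant. -/
structure Good (s : (Fin n → F n) × Matrix (Fin n) (Fin n) ℤ) : Prop where
  nz : ∀ j, s.1 j ≠ 0
  skew : Skew s.2
  unit : IsUnit (Lmat s.1)

variable {s : (Fin n → F n) × Matrix (Fin n) (Fin n) ℤ}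

lemma vec_eq_zero_of_vecMul (G : Good s) {v : Fin n → F n}
    (hv : Matrix.vecMul v (Lmat s.1) = 0) : v = 0 := by
  obtain ⟨u, hu⟩ := G.unit
  calc v = Matrix.vecMul v ((u : Matrix (Fin n) (Fin n) (F n)) * ((u⁻¹ : _) : Matrix (Fin n) (Fin n) (F n))) := by
        rw [← Units.val_mul, mul_inv_cancel, Units.val_one, Matrix.vecMul_one]
  _ = Matrix.vecMul (Matrix.vecMul v (Lmat s.1)) ((u⁻¹ : _) : Matrix (Fin n) (Fin n) (F n)) := by
        rw [← Matrix.vecMul_vecMul, hu]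
  _ = 0 := by rw [hv, Matrix.zero_vecMul]

lemma Dm_Mplus (G : Good s) (i m : Fin n) :
    Dm m (∏ j, s.1 j ^ (max (s.2 j i) 0).toNat)
      = (∏ j, s.1 j ^ (max (s.2 j i) 0).toNat)
        * ∑ j, (((max (s.2 j i) 0).toNat : ℕ) : F n) * (Dm m (s.1 j) / s.1 j) :=
  Dm_prod_pow m s.1 G.nz _ Finset.univ

lemma Mplus_ne_zero (G : Good s) (i : Fin n) :
    (∏ j, s.1 j ^ (max (s.2 j i) 0).toNat) ≠ 0 :=
  Finset.prod_ne_zero_iff.2 fun j _ => pow_ne_zero _ (G.nz j)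

lemma Mminus_ne_zero (G : Good s) (i : Fin n) :
    (∏ j, s.1 j ^ (max (-s.2 j i) 0).toNat) ≠ 0 :=
  Finset.prod_ne_zero_iff.2 fun j _ => pow_ne_zero _ (G.nz j)

lemma Pex_ne_zero (G : Good s) (i : Fin n) :
    (∏ j, s.1 j ^ (max (s.2 j i) 0).toNat) + (∏ j, s.1 j ^ (max (-s.2 j i) 0).toNat) ≠ 0 := by
  intro hP
  set Mp := ∏ j, s.1 j ^ (max (s.2 j i) 0).toNat with hMp
  set Mm := ∏ j, s.1 j ^ (max (-s.2 j i) 0).toNat with hMm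
  have hMm' : Mm = -Mp := by linear_combination hP
  have key : ∀ m, ∑ j, ((s.2 j i : ℤ) : F n) * (Dm m (s.1 j) / s.1 j) = 0 := by
    intro m
    have h0 : Dm m (Mp + Mm) = 0 := by rw [hP, Dm_zero]
    rw [Dm_add, hMp, hMm, Dm_Mplus G i m, Dm_prod_pow m s.1 G.nz _ Finset.univ, ← hMp, ← hMm,
      hMm'] at h0
    have hMp0 : Mp ≠ 0 := hMp ▸ Mplus_ne_zero G i
    have h1 : ∑ j, ((((max (s.2 j i) 0).toNat : ℕ) : F n)
          - (((max (-s.2 j i) 0).toNat : ℕ) : F n)) * (Dm m (s.1 j) / s.1 j) = 0 := by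
      refine mul_left_cancel₀ hMp0 ?_
      rw [mul_zero]
      rw [Finset.mul_sum]
      · skip
        have expand : ∀ j ∈ Finset.univ, Mp * (((((max (s.2 j i) 0).toNat : ℕ) : F n)
            - (((max (-s.2 j i) 0).toNat : ℕ) : F n)) * (Dm m (s.1 j) / s.1 j))
            = Mp * ((((max (s.2 j i) 0).toNat : ℕ) : F n) * (Dm m (s.1 j) / s.1 j))
              - Mp * ((((max (-s.2 j i) 0).toNat : ℕ) : F n) * (Dm m (s.1 j) / s.1 j)) := by
          intro j _; ring
        rw [Finset.sum_congr rfl expand, Finset.sum_sub_distrib, ← Finset.mul_sum, ← Finset.mul_sum]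
        linear_combination h0
    calc ∑ j, ((s.2 j i : ℤ) : F n) * (Dm m (s.1 j) / s.1 j)
        = ∑ j, ((((max (s.2 j i) 0).toNat : ℕ) : F n)
            - (((max (-s.2 j i) 0).toNat : ℕ) : F n)) * (Dm m (s.1 j) / s.1 j) := by
          refine Finset.sum_congr rfl fun j _ => ?_
          rw [natCast_toNat_max, natCast_toNat_max, ← Int.cast_sub, max_sub_max]
    _ = 0 := h1
  have hv : Matrix.vecMul (fun j => ((s.2 j i : ℤ) : F n)) (Lmat s.1) = 0 := by
    funext m
    rw [Matrix.vecMul, dotProduct]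
    simpa [Lmat] using key m
  have hzero := vec_eq_zero_of_vecMul G hv
  have hC : ∀ j, s.2 j i = 0 := by
    intro j
    have : ((s.2 j i : ℤ) : F n) = 0 := congrFun hzero j
    exact_mod_cast this
  have hMp1 : Mp = 1 := by
    rw [hMp]
    apply Finset.prod_eq_one
    intro j _
    rw [hC j]
    norm_num
  have hMm1 : Mm = 1 := by
    rw [hMm]
    apply Finset.prod_eq_one
    intro j _
    rw [hC j]
    norm_num
  rw [hMp1, hMm1] at hP
  norm_num at hP

lemma Dlog_div (m : Fin n) {x y : F n} (hx : x ≠ 0) (hy : y ≠ 0) :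
    Dm m (x / y) / (x / y) = Dm m x / x - Dm m y / y := by
  rw [Dm_div m x y hy]
  field_simp

set_option maxHeartbeats 1000000 in
lemma Lmat_mutate (G : Good s) (i : Fin n) :
    Lmat ((seedMutate s i).1)
      = Emat s.2 i ((∏ j, s.1 j ^ (max (s.2 j i) 0).toNat)
          / ((∏ j, s.1 j ^ (max (s.2 j i) 0).toNat) + ∏ j, s.1 j ^ (max (-s.2 j i) 0).toNat))
        * Lmat s.1 := by
  set Mp := ∏ j, s.1 j ^ (max (s.2 j i) 0).toNat with hMp
  set Mm := ∏ j, s.1 j ^ (max (-s.2 j i) 0).toNat with hMm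
  set t := Mp / (Mp + Mm) with ht
  have hP : Mp + Mm ≠ 0 := Pex_ne_zero G i
  have hMp0 : Mp ≠ 0 := Mplus_ne_zero G i
  have hMm0 : Mm ≠ 0 := Mminus_ne_zero G i
  ext j m
  rw [Emat_mul_apply]
  by_cases hj : j = i
  · replace hj := hj.symm
    subst hj
    simp only [if_pos rfl]
    set Sa := ∑ k, (((max (s.2 k i) 0).toNat : ℕ) : F n) * (Dm m (s.1 k) / s.1 k) with hSa
    set Sb := ∑ k, (((max (-s.2 k i) 0).toNat : ℕ) : F n) * (Dm m (s.1 k) / s.1 k) with hSb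
    have hDP : Dm m (Mp + Mm) = Mp * Sa + Mm * Sb := by
      rw [Dm_add, hMp, hMm, Dm_prod_pow m s.1 G.nz _ Finset.univ,
        Dm_prod_pow m s.1 G.nz _ Finset.univ, hSa, hSb]
    have hEsum : ∑ k, Evec s.2 i t k * Lmat s.1 k m
        = Sb + t * (Sa - Sb) - 2 * Lmat s.1 i m := by
      have e1 : ∀ k ∈ Finset.univ, Evec s.2 i t k * Lmat s.1 k m
          = (((max (-s.2 k i) 0).toNat : ℕ) : F n) * (Dm m (s.1 k) / s.1 k)
            + t * (((s.2 k i : ℤ) : F n) * (Dm m (s.1 k) / s.1 k))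
            - (if k = i then 2 * Lmat s.1 k m else 0) := by
        intro k _
        rw [Evec, natCast_toNat_max]
        show (((max (-s.2 k i) 0 : ℤ) : F n) + t * ((s.2 k i : ℤ) : F n)
            - (if k = i then 2 else 0)) * (Dm m (s.1 k) / s.1 k) = _
        simp only [Lmat, Matrix.of_apply]
        by_cases hk : k = i
        · rw [if_pos hk, if_pos hk]; ring
        · rw [if_neg hk, if_neg hk]; ring
      rw [Finset.sum_congr rfl e1, Finset.sum_sub_distrib, Finset.sum_add_distrib,
        ← Finset.mul_sum, Finset.sum_ite_eq' Finset.univ i]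
      have e2 : ∑ k, ((s.2 k i : ℤ) : F n) * (Dm m (s.1 k) / s.1 k) = Sa - Sb := by
        rw [hSa, hSb, ← Finset.sum_sub_distrib]
        refine Finset.sum_congr rfl fun k _ => ?_
        have hc : ((max (s.2 k i) 0 : ℤ) : F n) - ((max (-s.2 k i) 0 : ℤ) : F n)
            = ((s.2 k i : ℤ) : F n) := by rw [← Int.cast_sub, max_sub_max]
        rw [natCast_toNat_max, natCast_toNat_max]
        linear_combination (-(Dm m (s.1 k) / s.1 k)) * hc
      rw [e2]
      simp [Lmat, hSb]
    rw [hEsum]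
    have hupd : (seedMutate s i).1 i = (Mp + Mm) / s.1 i := by
      show Function.update s.1 i _ i = _
      rw [Function.update_self]
    have hL : Lmat ((seedMutate s i).1) i m = Dm m ((Mp + Mm) / s.1 i) / ((Mp + Mm) / s.1 i) := by
      simp only [Lmat, Matrix.of_apply, hupd]
    rw [hL, Dlog_div m hP (G.nz i), hDP]
    have hLim : Lmat s.1 i m = Dm m (s.1 i) / s.1 i := rfl
    rw [hLim, ht]
    have hLkm : ∀ k, Lmat s.1 k m = Dm m (s.1 k) / s.1 k := fun k => rfl
    simp only [↓reduceIte]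
    field_simp
    ring
  · have hupd : (seedMutate s i).1 j = s.1 j := by
      show Function.update s.1 i _ j = _
      rw [Function.update_of_ne hj]
    simp only [Lmat, Matrix.of_apply, hupd, if_neg hj, add_zero]

lemma Good_mutate (G : Good s) (i : Fin n) : Good (seedMutate s i) := by
  refine ⟨?_, ?_, ?_⟩
  · intro j
    by_cases hj : j = i
    · subst hj
      show Function.update s.1 j _ j ≠ 0
      rw [Function.update_self]
      exact div_ne_zero (Pex_ne_zero G j) (G.nz j)
    · show Function.update s.1 i _ j ≠ 0
      rw [Function.update_of_ne hj]
      exact G.nz j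
  · exact skew_mutate G.skew i
  · rw [Lmat_mutate G i]
    exact (isUnit_Emat G.skew i _).mul G.unit

noncomputable def Phi (s : (Fin n → F n) × Matrix (Fin n) (Fin n) ℤ) :
    Matrix (Fin n) (Fin n) (F n) :=
  (Lmat s.1)ᵀ * Cf s.2 * Lmat s.1

lemma Phi_mutate (G : Good s) (i : Fin n) : Phi (seedMutate s i) = Phi s := by
  have h2 : (seedMutate s i).2 = mutate s.2 i := rfl
  rw [Phi, Phi, h2, Lmat_mutate G i, Matrix.transpose_mul]
  have key := EtCE (C := s.2) (i := i)
    (t := (∏ j, s.1 j ^ (max (s.2 j i) 0).toNat)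
      / ((∏ j, s.1 j ^ (max (s.2 j i) 0).toNat) + ∏ j, s.1 j ^ (max (-s.2 j i) 0).toNat))
    G.skew
  have h := congrArg (fun M => (Lmat s.1)ᵀ * M * Lmat s.1) key
  simp only [Matrix.mul_assoc] at h ⊢
  exact h

lemma Lmat_init : Lmat (fun i : Fin n => X i) = Matrix.diagonal (fun j => (X j)⁻¹) := by
  ext j m
  simp only [Lmat, Matrix.of_apply, Dm_X]
  by_cases hj : j = m
  · subst hj
    simp [Matrix.diagonal_apply_eq, one_div]
  · rw [if_neg hj, Matrix.diagonal_apply_ne _ hj, zero_div]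

lemma Good_init {B : Matrix (Fin n) (Fin n) ℤ} (hB : Skew B) :
    Good ((fun i : Fin n => X i), B) := by
  refine ⟨fun j => X_ne_zero j, hB, ?_⟩
  show IsUnit (Lmat (fun i : Fin n => X i))
  rw [Lmat_init]
  have h1 : Matrix.diagonal (fun j : Fin n => (X j)⁻¹) * Matrix.diagonal (fun j => X j) = 1 := by
    rw [Matrix.diagonal_mul_diagonal]
    convert Matrix.diagonal_one
    exact inv_mul_cancel₀ (X_ne_zero _)
  have h2 : Matrix.diagonal (fun j : Fin n => X j) * Matrix.diagonal (fun j => (X j)⁻¹) = 1 := by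
    rw [Matrix.diagonal_mul_diagonal]
    convert Matrix.diagonal_one
    exact mul_inv_cancel₀ (X_ne_zero _)
  exact ⟨⟨_, _, h1, h2⟩, rfl⟩

lemma reachable_good {B : Matrix (Fin n) (Fin n) ℤ} (hB : Skew B)
    {u : (Fin n → F n) × Matrix (Fin n) (Fin n) ℤ}
    (h : Reachable ((fun i : Fin n => X i), B) u) :
    Good u ∧ Phi u = Phi ((fun i : Fin n => X i), B) := by
  induction h with
  | refl => exact ⟨Good_init hB, rfl⟩
  | tail hsteps hmut ih =>
      obtain ⟨i, rfl⟩ := hmut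
      exact ⟨Good_mutate ih.1 i, (Phi_mutate ih.1 i).trans ih.2⟩

lemma inj_of_good (G : Good s) : Function.Injective s.1 := by
  intro j k hjk
  by_contra hne
  have hrow : Lmat s.1 j = Lmat s.1 k := by
    funext m
    simp only [Lmat, Matrix.of_apply, hjk]
  have hdet : (Lmat s.1).det = 0 := Matrix.det_zero_of_row_eq hne hrow
  have := G.unit
  rw [Matrix.isUnit_iff_isUnit_det, hdet] at this
  exact not_isUnit_zero this

end Aux

/-- A seed of an acyclic cluster algebra is determined by its cluster: two seeds
reachable from the initial seed `((x₁,…,xₙ), B)` having the same cluster (set of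
entries) agree up to simultaneous relabelling by a permutation. -/
theorem seed_determined_by_cluster {n : ℕ} (hn : 1 ≤ n)
    (B : Matrix (Fin n) (Fin n) ℤ) (hB : ∀ j k, B k j = -B j k)
    (hacyclic : ∃ e : Fin n ≃ Fin n, ∀ j k : Fin n, j < k → 0 ≤ B (e j) (e k))
    (s s' : (Fin n → F n) × Matrix (Fin n) (Fin n) ℤ)
    (hs : Reachable ((fun i => X i), B) s)
    (hs' : Reachable ((fun i => X i), B) s')
    (hcluster : Set.range s'.1 = Set.range s.1) :
    ∃ σ : Equiv.Perm (Fin n),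
      (∀ j, s'.1 j = s.1 (σ j)) ∧ (∀ j k, s'.2 j k = s.2 (σ j) (σ k)) := by
  classical
  have hBskew : Aux.Skew B := hB
  obtain ⟨G, hPhi⟩ := Aux.reachable_good hBskew hs
  obtain ⟨G', hPhi'⟩ := Aux.reachable_good hBskew hs'
  have hinj : Function.Injective s.1 := Aux.inj_of_good G
  have hinj' : Function.Injective s'.1 := Aux.inj_of_good G'
  -- build the permutation
  have hex : ∀ j, ∃ k, s.1 k = s'.1 j := by
    intro j
    have : s'.1 j ∈ Set.range s.1 := hcluster ▸ Set.mem_range_self j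
    exact this
  choose f hf using hex
  have hfinj : Function.Injective f := by
    intro j₁ j₂ h12
    apply hinj'
    rw [← hf j₁, ← hf j₂, h12]
  have hfbij : Function.Bijective f := (Finite.injective_iff_bijective).1 hfinj
  let σ : Equiv.Perm (Fin n) := Equiv.ofBijective f hfbij
  have hσ : ∀ j, s.1 (σ j) = s'.1 j := fun j => hf j
  refine ⟨σ, fun j => (hσ j).symm, ?_⟩
  -- matrix part
  have hLs' : Aux.Lmat s'.1 = (Aux.Lmat s.1).submatrix σ id := by
    ext j m
    simp only [Aux.Lmat, Matrix.of_apply, Matrix.submatrix_apply, id_eq, hσ j]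
  have hPhiEq : Aux.Phi s' = Aux.Phi s := hPhi'.trans hPhi.symm
  set M := Aux.Lmat s.1 with hM
  set A' : Matrix (Fin n) (Fin n) (F n) :=
    (Aux.Cf s'.2).submatrix (σ.symm : Fin n → Fin n) (σ.symm : Fin n → Fin n) with hA'
  have hA : Aux.Cf s'.2 = A'.submatrix (σ : Fin n → Fin n) (σ : Fin n → Fin n) := by
    ext j k
    simp [hA', Matrix.submatrix_apply]
  have hPhi'val : Aux.Phi s' = M.transpose * A' * M := by
    rw [Aux.Phi, hLs', hA, Matrix.transpose_submatrix]
    rw [Matrix.submatrix_mul_equiv M.transpose A' id σ (σ : Fin n → Fin n),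
      Matrix.submatrix_mul_equiv (M.transpose * A') M id σ id, Matrix.submatrix_id_id]
  have hcancel : A' = Aux.Cf s.2 := by
    have hMu : IsUnit M := G.unit
    have hMTu : IsUnit M.transpose := by
      rw [Matrix.isUnit_iff_isUnit_det, Matrix.det_transpose,
        ← Matrix.isUnit_iff_isUnit_det]
      exact hMu
    have heq : M.transpose * A' * M = M.transpose * Aux.Cf s.2 * M := by
      rw [← hPhi'val, hPhiEq, Aux.Phi, ← hM]
    have heq2 : M.transpose * A' = M.transpose * Aux.Cf s.2 := hMu.mul_right_cancel heq
    exact hMTu.mul_left_cancel heq2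
  intro j k
  have : Aux.Cf s'.2 j k = Aux.Cf s.2 (σ j) (σ k) := by
    rw [hA, Matrix.submatrix_apply, hcancel]
  have hcast : ((s'.2 j k : ℤ) : F n) = ((s.2 (σ j) (σ k) : ℤ) : F n) := this
  exact_mod_cast hcast
end

section
/- (Type A₂ has exactly 5 cluster variables and 5 clusters.) Let F = Frac(ℚ[x₁,x₂]) with canonical generators x₁, x₂, let B = [[0,1],[−1,0]] (the quiver 1 → 2), and consider the initial seed ((x₁,x₂), B). Then the set of all cluster variables (entries of seeds reachable from the initial seed by finite sequences of seed mutations) is exactly the 5-element set {x₁, x₂, (1+x₂)/x₁, (1+x₁+x₂)/(x₁x₂), (1+x₁)/x₂}, and the set of all clusters (the 2-element sets of entries of reachable seeds) has exactly 5 elements, namely {x₁,x₂}, {x₂,(1+x₂)/x₁}, {(1+x₂)/x₁,(1+x₁+x₂)/(x₁x₂)}, {(1+x₁+x₂)/(x₁x₂),(1+x₁)/x₂}, {(1+x₁)/x₂,x₁}. -/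
open scoped BigOperators

set_option maxHeartbeats 1000000
abbrev Bp : Matrix (Fin 2) (Fin 2) ℤ := !![0, 1; -1, 0]
abbrev Bm : Matrix (Fin 2) (Fin 2) ℤ := !![0, -1; 1, 0]

lemma upd0 (u v w : F 2) : Function.update ![u, v] (0 : Fin 2) w = ![w, v] := by
  funext j; fin_cases j <;> simp [Function.update]
lemma upd1 (u v w : F 2) : Function.update ![u, v] (1 : Fin 2) w = ![u, w] := by
  funext j; fin_cases j <;> simp [Function.update]

lemma smP0 (u v : F 2) : seedMutate (![u, v], Bp) 0 = (![(1 + v) / u, v], Bm) := by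
  unfold seedMutate
  refine Prod.ext ?_ (show mutate Bp 0 = Bm by decide)
  show Function.update ![u, v] 0 _ = _
  rw [upd0]
  congr 2
  simp [Fin.prod_univ_two]

lemma smP1 (u v : F 2) : seedMutate (![u, v], Bp) 1 = (![u, (u + 1) / v], Bm) := by
  unfold seedMutate
  refine Prod.ext ?_ (show mutate Bp 1 = Bm by decide)
  show Function.update ![u, v] 1 _ = _
  rw [upd1]
  congr 2
  simp [Fin.prod_univ_two]

lemma smM0 (u v : F 2) : seedMutate (![u, v], Bm) 0 = (![(v + 1) / u, v], Bp) := by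
  unfold seedMutate
  refine Prod.ext ?_ (show mutate Bm 0 = Bp by decide)
  show Function.update ![u, v] 0 _ = _
  rw [upd0]
  congr 2
  simp [Fin.prod_univ_two]

lemma smM1 (u v : F 2) : seedMutate (![u, v], Bm) 1 = (![u, (1 + u) / v], Bp) := by
  unfold seedMutate
  refine Prod.ext ?_ (show mutate Bm 1 = Bp by decide)
  show Function.update ![u, v] 1 _ = _
  rw [upd1]
  congr 2
  simp [Fin.prod_univ_two]

lemma amap_ne (p q : MvPolynomial (Fin 2) ℚ) (v : Fin 2 → ℚ)
    (h : MvPolynomial.eval v p ≠ MvPolynomial.eval v q) :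
    algebraMap (MvPolynomial (Fin 2) ℚ) (F 2) p ≠ algebraMap (MvPolynomial (Fin 2) ℚ) (F 2) q :=
  fun hh => h (congrArg (MvPolynomial.eval v) (IsFractionRing.injective (MvPolynomial (Fin 2) ℚ) (F 2) hh))

lemma hx0 : (X 0 : F 2) ≠ 0 := by
  rw [show (0 : F 2) = algebraMap (MvPolynomial (Fin 2) ℚ) (F 2) 0 by simp]
  exact amap_ne _ _ ![2, 4] (by norm_num)

lemma hx1 : (X 1 : F 2) ≠ 0 := by
  rw [show (0 : F 2) = algebraMap (MvPolynomial (Fin 2) ℚ) (F 2) 0 by simp]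
  exact amap_ne _ _ ![2, 4] (by norm_num)

lemma h1x0 : (1 + X 0 : F 2) ≠ 0 := by
  rw [show (1 + X 0 : F 2) = algebraMap (MvPolynomial (Fin 2) ℚ) (F 2) (1 + MvPolynomial.X 0) by
    simp [X], show (0 : F 2) = algebraMap (MvPolynomial (Fin 2) ℚ) (F 2) 0 by simp]
  exact amap_ne _ _ ![2, 4] (by norm_num)

lemma h1x1 : (1 + X 1 : F 2) ≠ 0 := by
  rw [show (1 + X 1 : F 2) = algebraMap (MvPolynomial (Fin 2) ℚ) (F 2) (1 + MvPolynomial.X 1) by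
    simp [X], show (0 : F 2) = algebraMap (MvPolynomial (Fin 2) ℚ) (F 2) 0 by simp]
  exact amap_ne _ _ ![2, 4] (by norm_num)

lemma h1x01 : (1 + X 0 + X 1 : F 2) ≠ 0 := by
  rw [show (1 + X 0 + X 1 : F 2)
      = algebraMap (MvPolynomial (Fin 2) ℚ) (F 2) (1 + MvPolynomial.X 0 + MvPolynomial.X 1) by
    simp [X], show (0 : F 2) = algebraMap (MvPolynomial (Fin 2) ℚ) (F 2) 0 by simp]
  exact amap_ne _ _ ![2, 4] (by norm_num)

noncomputable def vc : F 2 := (1 + X 1) / X 0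
noncomputable def vd : F 2 := (1 + X 0 + X 1) / (X 0 * X 1)
noncomputable def ve : F 2 := (1 + X 0) / X 1

lemma id1 : (X 1 + 1) / vc = X 0 := by
  rw [vc]; field_simp [hx0, h1x1]; first | ring | tauto
lemma id2 : (1 + vc) / X 1 = vd := by
  rw [vc, vd]; field_simp [hx0, hx1]; first | ring | tauto
lemma id3 : (1 + vd) / vc = ve := by
  rw [vc, vd, ve]; field_simp [hx0, hx1, h1x1]; first | ring | tauto
lemma id4 : (vc + 1) / vd = X 1 := by
  rw [vc, vd]; field_simp [hx0, hx1, h1x01]; first | ring | tauto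
lemma id5 : (vd + 1) / ve = vc := by
  rw [vc, vd, ve]; field_simp [hx0, hx1, h1x0]; first | ring | tauto
lemma id6 : (1 + ve) / vd = X 0 := by
  rw [vd, ve]; field_simp [hx0, hx1, h1x01]; first | ring | tauto
lemma id7 : (1 + X 0) / ve = X 1 := by
  rw [ve]; field_simp [hx1, h1x0]; first | ring | tauto | skip
lemma id8 : (ve + 1) / X 0 = vd := by
  rw [vd, ve]; field_simp [hx0, hx1]
lemma idc : (1 + X 1) / X 0 = vc := rfl
lemma ide : (X 0 + 1) / X 1 = ve := by rw [ve, add_comm]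

noncomputable def seeds : Set ((Fin 2 → F 2) × Matrix (Fin 2) (Fin 2) ℤ) :=
  {(![X 0, X 1], Bp), (![vc, X 1], Bm), (![vc, vd], Bp), (![ve, vd], Bm), (![ve, X 0], Bp),
   (![X 1, X 0], Bm), (![X 1, vc], Bp), (![vd, vc], Bm), (![vd, ve], Bp), (![X 0, ve], Bm)}

lemma fin2 : ∀ i : Fin 2, i = 0 ∨ i = 1 := by decide

lemma seeds_closed : ∀ s ∈ seeds, ∀ i : Fin 2, seedMutate s i ∈ seeds := by
  intro s hs i
  simp only [seeds, Set.mem_insert_iff, Set.mem_singleton_iff] at hs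
  rcases hs with rfl | rfl | rfl | rfl | rfl | rfl | rfl | rfl | rfl | rfl <;> rcases fin2 i with rfl | rfl
  · rw [smP0, idc]; simp [seeds]
  · rw [smP1, ide]; simp [seeds]
  · rw [smM0, id1]; simp [seeds]
  · rw [smM1, id2]; simp [seeds]
  · rw [smP0, id3]; simp [seeds]
  · rw [smP1, id4]; simp [seeds]
  · rw [smM0, id5]; simp [seeds]
  · rw [smM1, id6]; simp [seeds]
  · rw [smP0, id7]; simp [seeds]
  · rw [smP1, id8]; simp [seeds]
  · rw [smM0, ide]; simp [seeds]
  · rw [smM1, idc]; simp [seeds]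
  · rw [smP0, id2]; simp [seeds]
  · rw [smP1, id1]; simp [seeds]
  · rw [smM0, id4]; simp [seeds]
  · rw [smM1, id3]; simp [seeds]
  · rw [smP0, id6]; simp [seeds]
  · rw [smP1, id5]; simp [seeds]
  · rw [smM0, id8]; simp [seeds]
  · rw [smM1, id7]; simp [seeds]

lemma init_eq : (((fun i => X i) : Fin 2 → F 2), (!![0, 1; -1, 0] : Matrix (Fin 2) (Fin 2) ℤ))
    = (![X 0, X 1], Bp) := by
  refine Prod.ext ?_ rfl
  funext j; rcases fin2 j with rfl | rfl <;> simp

lemma reach_mem {t} (h : Reachable (![X 0, X 1], Bp) t) : t ∈ seeds := by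
  induction h with
  | refl => simp [seeds]
  | tail _ h ih => obtain ⟨i, rfl⟩ := h; exact seeds_closed _ ih i

lemma r0 : Reachable (![X 0, X 1], Bp) (![X 0, X 1], Bp) := Relation.ReflTransGen.refl
lemma r1 : Reachable (![X 0, X 1], Bp) (![vc, X 1], Bm) :=
  Relation.ReflTransGen.single ⟨0, by rw [smP0, idc]⟩
lemma r2 : Reachable (![X 0, X 1], Bp) (![vc, vd], Bp) :=
  r1.tail ⟨1, by rw [smM1, id2]⟩
lemma r3 : Reachable (![X 0, X 1], Bp) (![ve, vd], Bm) :=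
  r2.tail ⟨0, by rw [smP0, id3]⟩
lemma r4 : Reachable (![X 0, X 1], Bp) (![ve, X 0], Bp) :=
  r3.tail ⟨1, by rw [smM1, id6]⟩

lemma neAB : (X 0 : F 2) ≠ X 1 := by
  have := amap_ne (MvPolynomial.X 0) (MvPolynomial.X 1) ![2, 4] (by norm_num)
  simpa [X] using this
lemma neAC : (X 0 : F 2) ≠ vc := by
  rw [vc, Ne, eq_div_iff hx0]
  have := amap_ne (MvPolynomial.X 0 * MvPolynomial.X 0) (1 + MvPolynomial.X 1) ![2, 4]
    (by norm_num)
  simpa [X] using this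
lemma neAD : (X 0 : F 2) ≠ vd := by
  rw [vd, Ne, eq_div_iff (mul_ne_zero hx0 hx1)]
  have := amap_ne (MvPolynomial.X 0 * (MvPolynomial.X 0 * MvPolynomial.X 1))
    (1 + MvPolynomial.X 0 + MvPolynomial.X 1) ![2, 4] (by norm_num)
  simpa [X] using this
lemma neAE : (X 0 : F 2) ≠ ve := by
  rw [ve, Ne, eq_div_iff hx1]
  have := amap_ne (MvPolynomial.X 0 * MvPolynomial.X 1) (1 + MvPolynomial.X 0) ![2, 4]
    (by norm_num)
  simpa [X] using this
lemma neBC : (X 1 : F 2) ≠ vc := by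
  rw [vc, Ne, eq_div_iff hx0]
  have := amap_ne (MvPolynomial.X 1 * MvPolynomial.X 0) (1 + MvPolynomial.X 1) ![2, 4]
    (by norm_num)
  simpa [X] using this
lemma neBD : (X 1 : F 2) ≠ vd := by
  rw [vd, Ne, eq_div_iff (mul_ne_zero hx0 hx1)]
  have := amap_ne (MvPolynomial.X 1 * (MvPolynomial.X 0 * MvPolynomial.X 1))
    (1 + MvPolynomial.X 0 + MvPolynomial.X 1) ![2, 4] (by norm_num)
  simpa [X] using this
lemma neBE : (X 1 : F 2) ≠ ve := by
  rw [ve, Ne, eq_div_iff hx1]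
  have := amap_ne (MvPolynomial.X 1 * MvPolynomial.X 1) (1 + MvPolynomial.X 0) ![2, 4]
    (by norm_num)
  simpa [X] using this
lemma neCD : (vc : F 2) ≠ vd := by
  rw [vc, vd, Ne, div_eq_div_iff hx0 (mul_ne_zero hx0 hx1)]
  have := amap_ne ((1 + MvPolynomial.X 1) * (MvPolynomial.X 0 * MvPolynomial.X 1))
    ((1 + MvPolynomial.X 0 + MvPolynomial.X 1) * MvPolynomial.X 0) ![2, 4] (by norm_num)
  simpa [X] using this
lemma neCE : (vc : F 2) ≠ ve := by
  rw [vc, ve, Ne, div_eq_div_iff hx0 hx1]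
  have := amap_ne ((1 + MvPolynomial.X 1) * MvPolynomial.X 1)
    ((1 + MvPolynomial.X 0) * MvPolynomial.X 0) ![2, 4] (by norm_num)
  simpa [X] using this
lemma neDE : (vd : F 2) ≠ ve := by
  rw [vd, ve, Ne, div_eq_div_iff (mul_ne_zero hx0 hx1) hx1]
  have := amap_ne ((1 + MvPolynomial.X 0 + MvPolynomial.X 1) * MvPolynomial.X 1)
    ((1 + MvPolynomial.X 0) * (MvPolynomial.X 0 * MvPolynomial.X 1)) ![2, 4] (by norm_num)
  simpa [X] using this

lemma range_pair (u v : F 2) : Set.range ![u, v] = {u, v} := by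
  ext w
  constructor
  · rintro ⟨j, rfl⟩; rcases fin2 j with rfl | rfl <;> simp
  · rintro (rfl | rfl)
    exacts [⟨0, rfl⟩, ⟨1, rfl⟩]

lemma pair_ne {α : Type*} {a b c d : α} (h1 : a ≠ c) (h2 : a ≠ d) :
    ({a, b} : Set α) ≠ {c, d} := by
  intro h
  have : a ∈ ({c, d} : Set α) := h ▸ Set.mem_insert a {b}
  simp [h1, h2] at this

lemma pair_ne' {α : Type*} {a b c d : α} (h1 : b ≠ c) (h2 : b ≠ d) :
    ({a, b} : Set α) ≠ {c, d} := by
  intro h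
  have : b ∈ ({c, d} : Set α) := h ▸ Set.mem_insert_of_mem a rfl
  simp [h1, h2] at this

lemma varset_eq :
    {v : F 2 | ∃ s : (Fin 2 → F 2) × Matrix (Fin 2) (Fin 2) ℤ,
        Reachable ((fun i => X i), !![0, 1; -1, 0]) s ∧ ∃ j : Fin 2, v = s.1 j}
      = {X 0, X 1, vc, vd, ve} := by
  ext v
  simp only [Set.mem_setOf_eq, Set.mem_insert_iff, Set.mem_singleton_iff]
  constructor
  · rintro ⟨s, hr, j, rfl⟩
    rw [init_eq] at hr
    have hm := reach_mem hr
    simp only [seeds, Set.mem_insert_iff, Set.mem_singleton_iff] at hm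
    rcases hm with rfl | rfl | rfl | rfl | rfl | rfl | rfl | rfl | rfl | rfl <;>
      rcases fin2 j with rfl | rfl <;> simp
  · rintro (rfl | rfl | rfl | rfl | rfl)
    · exact ⟨(![X 0, X 1], Bp), init_eq ▸ r0, 0, by simp⟩
    · exact ⟨(![X 0, X 1], Bp), init_eq ▸ r0, 1, by simp⟩
    · exact ⟨(![vc, X 1], Bm), init_eq ▸ r1, 0, by simp⟩
    · exact ⟨(![vc, vd], Bp), init_eq ▸ r2, 1, by simp⟩
    · exact ⟨(![ve, vd], Bm), init_eq ▸ r3, 0, by simp⟩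

lemma clusterset_eq :
    {C : Set (F 2) | ∃ s : (Fin 2 → F 2) × Matrix (Fin 2) (Fin 2) ℤ,
        Reachable ((fun i => X i), !![0, 1; -1, 0]) s ∧ C = Set.range s.1}
      = {{X 0, X 1}, {X 1, vc}, {vc, vd}, {vd, ve}, {ve, X 0}} := by
  ext C
  simp only [Set.mem_setOf_eq, Set.mem_insert_iff, Set.mem_singleton_iff]
  constructor
  · rintro ⟨s, hr, rfl⟩
    rw [init_eq] at hr
    have hm := reach_mem hr
    simp only [seeds, Set.mem_insert_iff, Set.mem_singleton_iff] at hm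
    rcases hm with rfl | rfl | rfl | rfl | rfl | rfl | rfl | rfl | rfl | rfl
    · rw [range_pair]; simp
    · rw [range_pair, Set.pair_comm vc (X 1)]; simp
    · rw [range_pair]; simp
    · rw [range_pair, Set.pair_comm ve vd]; simp
    · rw [range_pair]; simp
    · rw [range_pair, Set.pair_comm (X 1) (X 0)]; simp
    · rw [range_pair]; simp
    · rw [range_pair, Set.pair_comm vd vc]; simp
    · rw [range_pair]; simp
    · rw [range_pair, Set.pair_comm (X 0) ve]; simp
  · rintro (rfl | rfl | rfl | rfl | rfl)
    · exact ⟨(![X 0, X 1], Bp), init_eq ▸ r0, (range_pair _ _).symm⟩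
    · exact ⟨(![vc, X 1], Bm), init_eq ▸ r1, by rw [range_pair, Set.pair_comm]⟩
    · exact ⟨(![vc, vd], Bp), init_eq ▸ r2, (range_pair _ _).symm⟩
    · exact ⟨(![ve, vd], Bm), init_eq ▸ r3, by rw [range_pair, Set.pair_comm]⟩
    · exact ⟨(![ve, X 0], Bp), init_eq ▸ r4, (range_pair _ _).symm⟩


/-- Type `A₂` (the quiver `1 → 2`) has exactly `5` cluster variables and exactly
`5` clusters, explicitly listed. -/
theorem typeA2_five_cluster_variables :
    {v : F 2 | ∃ s : (Fin 2 → F 2) × Matrix (Fin 2) (Fin 2) ℤ,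
        Reachable ((fun i => X i), !![0, 1; -1, 0]) s ∧ ∃ j : Fin 2, v = s.1 j}
      = {X 0, X 1, (1 + X 1) / X 0, (1 + X 0 + X 1) / (X 0 * X 1), (1 + X 0) / X 1} ∧
    Set.ncard {v : F 2 | ∃ s : (Fin 2 → F 2) × Matrix (Fin 2) (Fin 2) ℤ,
        Reachable ((fun i => X i), !![0, 1; -1, 0]) s ∧ ∃ j : Fin 2, v = s.1 j} = 5 ∧
    {C : Set (F 2) | ∃ s : (Fin 2 → F 2) × Matrix (Fin 2) (Fin 2) ℤ,
        Reachable ((fun i => X i), !![0, 1; -1, 0]) s ∧ C = Set.range s.1}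
      = {{X 0, X 1}, {X 1, (1 + X 1) / X 0},
          {(1 + X 1) / X 0, (1 + X 0 + X 1) / (X 0 * X 1)},
          {(1 + X 0 + X 1) / (X 0 * X 1), (1 + X 0) / X 1},
          {(1 + X 0) / X 1, X 0}} ∧
    Set.ncard {C : Set (F 2) | ∃ s : (Fin 2 → F 2) × Matrix (Fin 2) (Fin 2) ℤ,
        Reachable ((fun i => X i), !![0, 1; -1, 0]) s ∧ C = Set.range s.1} = 5 := by
  rw [show (1 + X 1) / X 0 = vc from rfl, show (1 + X 0 + X 1) / (X 0 * X 1) = vd from rfl,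
    show (1 + X 0) / X 1 = ve from rfl]
  refine ⟨varset_eq, ?_, clusterset_eq, ?_⟩
  · rw [varset_eq]
    rw [Set.ncard_insert_of_notMem (by simp [neAB, neAC, neAD, neAE]),
      Set.ncard_insert_of_notMem (by simp [neBC, neBD, neBE]),
      Set.ncard_insert_of_notMem (by simp [neCD, neCE]),
      Set.ncard_insert_of_notMem (by simp [neDE]), Set.ncard_singleton]
  · rw [clusterset_eq]
    have n12 : ({X 0, X 1} : Set (F 2)) ≠ {X 1, vc} := pair_ne neAB neAC
    have n13 : ({X 0, X 1} : Set (F 2)) ≠ {vc, vd} := pair_ne neAC neAD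
    have n14 : ({X 0, X 1} : Set (F 2)) ≠ {vd, ve} := pair_ne neAD neAE
    have n15 : ({X 0, X 1} : Set (F 2)) ≠ {ve, X 0} := pair_ne' neBE neAB.symm
    have n23 : ({X 1, vc} : Set (F 2)) ≠ {vc, vd} := pair_ne neBC neBD
    have n24 : ({X 1, vc} : Set (F 2)) ≠ {vd, ve} := pair_ne neBD neBE
    have n25 : ({X 1, vc} : Set (F 2)) ≠ {ve, X 0} := pair_ne neBE neAB.symm
    have n34 : ({vc, vd} : Set (F 2)) ≠ {vd, ve} := pair_ne neCD neCE
    have n35 : ({vc, vd} : Set (F 2)) ≠ {ve, X 0} := pair_ne neCE neAC.symm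
    have n45 : ({vd, ve} : Set (F 2)) ≠ {ve, X 0} := pair_ne neDE neAD.symm
    rw [Set.ncard_insert_of_notMem (by simp [n12, n13, n14, n15]),
      Set.ncard_insert_of_notMem (by simp [n23, n24, n25]),
      Set.ncard_insert_of_notMem (by simp [n34, n35]),
      Set.ncard_insert_of_notMem (by simp [n45]), Set.ncard_singleton]
end
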